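/- Let k be an algebraically closed field and T a k-linear, Karoubi closed triangulated category with finite-dimensional morphism spaces and a Serre functor S. Let X be an indecomposable object, G an object of which X is not a direct summand, and ε_X : X → S(X) the canonical morphism dual to the projection End(X) → End(X)/Rad End(X) ≅ k. Then ε_X is G-ghost: for every morphism α : G[j] → X, the composition ε_X ∘ α is zero. -/

import Mathlib

open CategoryTheory Limits Pretriangulated

universe v u

private lemma exists_X_pow_mul {k : Type*} [Field k] :
    ∀ (n : ℕ) (μ : Polynomial k), μ.natDegree = n → μ ≠ 0 →
      ∃ (s : ℕ) (ν : Polynomial k), μ = Polynomial.X ^ s * ν ∧ ν.coeff 0 ≠ 0 := by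
  intro n
  induction n using Nat.strong_induction_on with
  | _ n ih =>
            intro μ hdeg hμ
            by_cases h0 : μ.coeff 0 = 0
            · have hC : μ ≠ Polynomial.C (μ.coeff 0) := by
                rw [h0, map_zero]; exact hμ
              have hdx0 : μ.divX ≠ 0 := by
                rwa [Ne, Polynomial.divX_eq_zero_iff]
              have heq : Polynomial.X * μ.divX = μ := by
                conv_rhs => rw [← Polynomial.X_mul_divX_add μ]
                rw [h0, map_zero, add_zero]
              have hlt : μ.divX.natDegree < n := by
                rw [← hdeg, Polynomial.natDegree_divX_eq_natDegree_tsub_one]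
                have hne : μ.natDegree ≠ 0 := fun h =>
                  hC (Polynomial.eq_C_of_natDegree_eq_zero h)
                omega
              obtain ⟨s, ν, h1, h2⟩ := ih _ hlt μ.divX rfl hdx0
              refine ⟨s + 1, ν, ?_, h2⟩
              rw [← heq, h1, pow_succ]; ring
            · exact ⟨0, μ, by rw [pow_zero, one_mul], h0⟩

private lemma aux_isUnit_or_isNilpotent {k A : Type*} [Field k] [Ring A] [Algebra k A]
    (hidem : ∀ e : A, e * e = e → e = 0 ∨ e = 1)
    (ρ : A) (μ : Polynomial k) (hμ0 : μ ≠ 0) (hev : Polynomial.aeval (R := k) ρ μ = 0) :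
    IsUnit ρ ∨ IsNilpotent ρ := by
  obtain ⟨s, ν, rfl, hν0⟩ := exists_X_pow_mul μ.natDegree μ rfl hμ0
  have hφX : Polynomial.aeval (R := k) ρ Polynomial.X = ρ := Polynomial.aeval_X ρ
  rcases Nat.eq_zero_or_pos s with hs0 | hs
  · -- constant term nonzero : ρ is a unit
    left
    subst hs0
    have hν : Polynomial.aeval ρ ν = 0 := by simpa using hev
    set c := ν.coeff 0 with hcdef
    set d := Polynomial.aeval ρ ν.divX with hddef
    have h : ρ * d + algebraMap k A c = 0 := by
      have := congrArg (Polynomial.aeval ρ) (Polynomial.X_mul_divX_add ν)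
      rwa [map_add, map_mul, hφX, Polynomial.aeval_C, hν] at this
    have hcomm : d * ρ = ρ * d := by
      have h1 : d * ρ = Polynomial.aeval ρ (ν.divX * Polynomial.X) := by
        rw [map_mul, hφX]
      have h2 : ρ * d = Polynomial.aeval ρ (Polynomial.X * ν.divX) := by
        rw [map_mul, hφX]
      rw [h1, h2, mul_comm ν.divX]
    have hρd : ρ * d = -(algebraMap k A c) := by
      exact eq_neg_of_add_eq_zero_left h
    refine isUnit_iff_exists.mpr ⟨-(c⁻¹ • d), ?_, ?_⟩
    · rw [mul_neg, Algebra.mul_smul_comm, hρd, smul_neg, neg_neg,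
        Algebra.algebraMap_eq_smul_one, smul_smul, inv_mul_cancel₀ hν0, one_smul]
    · rw [neg_mul, smul_mul_assoc, hcomm, hρd, smul_neg, neg_neg,
        Algebra.algebraMap_eq_smul_one, smul_smul, inv_mul_cancel₀ hν0, one_smul]
  · -- s ≥ 1 : use coprimality and the idempotent dichotomy
    have hXν : IsCoprime (Polynomial.X : Polynomial k) ν := by
      set c := ν.coeff 0 with hcdef
      set d := ν.divX with hddef
      have h : Polynomial.X * d + Polynomial.C c = ν := Polynomial.X_mul_divX_add ν
      refine ⟨-(Polynomial.C c⁻¹) * d, Polynomial.C c⁻¹, ?_⟩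
      have hc : (Polynomial.C c⁻¹ : Polynomial k) * Polynomial.C c = 1 := by
        rw [← Polynomial.C_mul, inv_mul_cancel₀ hν0, Polynomial.C_1]
      rw [← h]
      linear_combination hc
    obtain ⟨a, b, hab⟩ := hXν.pow_left (m := s)
    have he : Polynomial.aeval ρ (a * Polynomial.X ^ s) *
        Polynomial.aeval ρ (a * Polynomial.X ^ s) =
        Polynomial.aeval ρ (a * Polynomial.X ^ s) := by
      have hp : (a * Polynomial.X ^ s) * (a * Polynomial.X ^ s)
          = a * Polynomial.X ^ s - (a * b) * (Polynomial.X ^ s * ν) := by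
        linear_combination (a * Polynomial.X ^ s) * hab
      have hz2 : Polynomial.aeval (R := k) ρ (a * b * (Polynomial.X ^ s * ν)) = 0 := by
        rw [map_mul, hev, mul_zero]
      rw [← map_mul, hp, map_sub, hz2, sub_zero]
    rcases hidem _ he with h0 | h1
    · -- idempotent is 0 : ρ is nilpotent
      right
      have hbν : Polynomial.aeval ρ (b * ν) = 1 := by
        have := congrArg (Polynomial.aeval ρ) hab
        rwa [map_add, map_one, h0, zero_add] at this
      refine ⟨s, ?_⟩
      have hz : Polynomial.aeval (R := k) ρ (Polynomial.X ^ s) = ρ ^ s := by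
        rw [map_pow, hφX]
      calc ρ ^ s = ρ ^ s * 1 := (mul_one _).symm
        _ = Polynomial.aeval ρ (Polynomial.X ^ s) * Polynomial.aeval ρ (b * ν) := by
            rw [hz, hbν]
        _ = Polynomial.aeval ρ (Polynomial.X ^ s * (b * ν)) := (map_mul _ _ _).symm
        _ = Polynomial.aeval ρ (b * (Polynomial.X ^ s * ν)) := by ring_nf
        _ = Polynomial.aeval ρ b * Polynomial.aeval ρ (Polynomial.X ^ s * ν) := map_mul _ _ _
        _ = 0 := by rw [hev, mul_zero]
    · -- idempotent is 1 : ρ is a unit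
      left
      obtain ⟨t, rfl⟩ : ∃ t, s = t + 1 := ⟨s - 1, (Nat.succ_pred_eq_of_pos hs).symm⟩
      refine isUnit_iff_exists.mpr ⟨Polynomial.aeval ρ (a * Polynomial.X ^ t), ?_, ?_⟩
      · calc ρ * Polynomial.aeval ρ (a * Polynomial.X ^ t)
            = Polynomial.aeval ρ (Polynomial.X * (a * Polynomial.X ^ t)) := by
              rw [map_mul (Polynomial.aeval (R := k) ρ) Polynomial.X (a * Polynomial.X ^ t), hφX]
          _ = Polynomial.aeval ρ (a * Polynomial.X ^ (t + 1)) := by ring_nf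
          _ = 1 := h1
      · calc Polynomial.aeval ρ (a * Polynomial.X ^ t) * ρ
            = Polynomial.aeval ρ ((a * Polynomial.X ^ t) * Polynomial.X) := by
              rw [map_mul (Polynomial.aeval (R := k) ρ) (a * Polynomial.X ^ t) Polynomial.X, hφX]
          _ = Polynomial.aeval ρ (a * Polynomial.X ^ (t + 1)) := by ring_nf
          _ = 1 := h1

private lemma flip_surjective_of_nondeg {k V W : Type*} [Field k]
    [AddCommGroup V] [Module k V] [AddCommGroup W] [Module k W]
    [FiniteDimensional k V] [FiniteDimensional k W]
    (B : V →ₗ[k] W →ₗ[k] k) (h : ∀ v : V, v ≠ 0 → ∃ w, B v w ≠ 0) :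
    Function.Surjective B.flip := by
  have hinj : Function.Injective B := by
    rw [← LinearMap.ker_eq_bot, LinearMap.ker_eq_bot']
    intro v hv
    by_contra h0
    obtain ⟨w, hw⟩ := h v h0
    exact hw (by rw [hv]; rfl)
  have hsurj : Function.Surjective B.dualMap :=
    LinearMap.dualMap_surjective_of_injective hinj
  intro φ
  obtain ⟨Φ, hΦ⟩ := hsurj φ
  obtain ⟨w, hw⟩ := (Module.evalEquiv k W).surjective Φ
  refine ⟨w, ?_⟩
  ext v
  have h1 : φ v = Φ (B v) := by rw [← hΦ]; rfl
  have h2 : Φ (B v) = B v w := by rw [← hw]; rfl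
  show B v w = φ v
  rw [h1, h2]

theorem serre_morphism_ghost {k : Type*} [Field k] [IsAlgClosed k]
    {T : Type u} [Category.{v} T] [HasZeroObject T] [HasShift T ℤ] [Preadditive T]
    [∀ n : ℤ, (shiftFunctor T n).Additive] [Pretriangulated T]
    [Linear k T] [IsIdempotentComplete T]
    (hfin : ∀ A B : T, FiniteDimensional k (A ⟶ B))
    (S : T ⥤ T) [S.IsEquivalence] [S.Additive]
    (tr : ∀ A : T, (A ⟶ S.obj A) →ₗ[k] k)
    (nondeg : ∀ (A B : T) (f : A ⟶ B), f ≠ 0 → ∃ g : B ⟶ S.obj A, tr A (f ≫ g) ≠ 0)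
    (X : T) (hXnz : ¬ IsZero X)
    (hXind : ∀ p : X ⟶ X, p ≫ p = p → p = 0 ∨ p = 𝟙 X)
    (εX : X ⟶ S.obj X) (hε1 : tr X εX = 1)
    (hεrad : ∀ r : X ⟶ X, ¬ IsIso r → tr X (r ≫ εX) = 0)
    (G : T)
    (hnotsummand : ∀ j : ℤ, ¬ ∃ (r : X ⟶ (G⟦j⟧ : T)) (s : (G⟦j⟧ : T) ⟶ X), r ≫ s = 𝟙 X)
    (j : ℤ) (α : (G⟦j⟧ : T) ⟶ X) :
    α ≫ εX = 0 := by
  classical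
  -- Step 1: every composite X ⟶ G⟦j⟧ ⟶ X is a non-isomorphism, hence killed by the trace
  have hker : ∀ f : X ⟶ (G⟦j⟧ : T), tr X (f ≫ (α ≫ εX)) = 0 := by
    intro f
    have hni : ¬ IsIso (f ≫ α) := by
      intro h
      exact hnotsummand j ⟨inv (f ≫ α) ≫ f, α, by simp⟩
    have h := hεrad (f ≫ α) hni
    rw [← Category.assoc] at *
    exact h
  -- Step 2: cone of α ≫ εX
  obtain ⟨C, p, q, hT⟩ := Pretriangulated.distinguished_cocone_triangle (α ≫ εX)
  have hzero : (α ≫ εX) ≫ p = 0 := comp_distTriang_mor_zero₁₂ _ hT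
  haveI := hfin X (S.obj X)
  haveI := hfin X C
  haveI := hfin C (S.obj X)
  -- Step 3: tr X factors through composition with p
  set P : (X ⟶ S.obj X) →ₗ[k] (X ⟶ C) := Linear.rightComp k X p with hP
  have hmem : (tr X) ∈ Submodule.dualAnnihilator (LinearMap.ker P) := by
    rw [Submodule.mem_dualAnnihilator]
    intro v hv
    have hv' : v ≫ p = 0 := by
      simpa [hP, Linear.rightComp] using (LinearMap.mem_ker.mp hv)
    obtain ⟨f, hf⟩ := Pretriangulated.Triangle.coyoneda_exact₂ _ hT v hv'
    rw [hf]
    exact hker f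
  rw [← LinearMap.range_dualMap_eq_dualAnnihilator_ker] at hmem
  obtain ⟨ξ, hξ⟩ := hmem
  -- Step 4: represent ξ by some t : C ⟶ S.obj X using nondegeneracy
  set B : (X ⟶ C) →ₗ[k] (C ⟶ S.obj X) →ₗ[k] k :=
    LinearMap.mk₂ k (fun u t => tr X (u ≫ t))
      (fun u₁ u₂ t => by rw [Preadditive.add_comp, map_add])
      (fun a u t => by rw [Linear.smul_comp, map_smul])
      (fun u t₁ t₂ => by rw [Preadditive.comp_add, map_add])
      (fun a u t => by rw [Linear.comp_smul, map_smul]) with hB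
  have hBnd : ∀ u : (X ⟶ C), u ≠ 0 → ∃ t, B u t ≠ 0 := by
    intro u hu
    obtain ⟨g, hg⟩ := nondeg X C u hu
    exact ⟨g, by simpa [hB] using hg⟩
  obtain ⟨t, ht⟩ := flip_surjective_of_nondeg B hBnd ξ
  -- Step 5: the key endomorphism ρ
  set ρ : S.obj X ⟶ S.obj X := p ≫ t with hρ
  have htr : ∀ v : X ⟶ S.obj X, tr X (v ≫ ρ) = tr X v := by
    intro v
    have h1 : tr X v = ξ (v ≫ p) := by
      rw [← hξ]
      rfl
    have h2 : ξ (v ≫ p) = tr X ((v ≫ p) ≫ t) := by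
      rw [← ht]
      rfl
    rw [h1, h2, hρ, ← Category.assoc]
  -- Step 6: idempotents in End (S.obj X) are trivial
  have hidem : ∀ e : CategoryTheory.End (S.obj X), e * e = e → e = 0 ∨ e = 1 := by
    intro e he
    have he' : (e : S.obj X ⟶ S.obj X) ≫ e = e := he
    have hrr : S.preimage e ≫ S.preimage e = S.preimage e := by
      apply S.map_injective
      rw [S.map_comp, S.map_preimage, he']
    rcases hXind _ hrr with h | h
    · left
      have := S.map_preimage e
      rw [h] at this
      rw [← this, Functor.map_zero]
    · right
      have := S.map_preimage e
      rw [h] at this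
      rw [← this, S.map_id]
      rfl
  -- Step 7: ρ is either a unit or nilpotent
  haveI : Module.Finite k (CategoryTheory.End (S.obj X)) := hfin (S.obj X) (S.obj X)
  let ρE : CategoryTheory.End (S.obj X) := ρ
  have hint : IsIntegral k ρE := IsIntegral.of_finite k _
  obtain ⟨μ, hmonic, hev⟩ := hint
  have hcase := aux_isUnit_or_isNilpotent hidem ρE μ
    hmonic.ne_zero (by rwa [Polynomial.aeval_def])
  rcases hcase with hunit | hnil
  · -- ρ unit : α ≫ εX = 0
    obtain ⟨u, hu1, hu2⟩ := isUnit_iff_exists.mp hunit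
    have hu2' : ρ ≫ u = 𝟙 (S.obj X) := hu2
    have hc : (α ≫ εX) ≫ ρ = 0 := by
      rw [hρ, ← Category.assoc, hzero, Limits.zero_comp]
    calc α ≫ εX = (α ≫ εX) ≫ 𝟙 (S.obj X) := (Category.comp_id _).symm
      _ = (α ≫ εX) ≫ (ρ ≫ u) := by rw [hu2']
      _ = ((α ≫ εX) ≫ ρ) ≫ u := by simp only [Category.assoc]
      _ = 0 := by rw [hc, Limits.zero_comp]
  · -- ρ nilpotent : contradiction with tr X εX = 1
    exfalso
    have hone := hnil.isUnit_one_sub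
    obtain ⟨w, hw1, hw2⟩ := isUnit_iff_exists.mp hone
    have hw1' : w ≫ (𝟙 (S.obj X) - ρ) = 𝟙 (S.obj X) := hw1
    have h1 : tr X ((εX ≫ w) ≫ (𝟙 (S.obj X) - ρ)) = 0 := by
      rw [Preadditive.comp_sub, Category.comp_id, map_sub, htr, sub_self]
    have h2 : (εX ≫ w) ≫ (𝟙 (S.obj X) - ρ) = εX := by
      rw [Category.assoc, hw1', Category.comp_id]
    rw [h2, hε1] at h1
    exact one_ne_zero h1
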